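/- Let X and Y be metric spaces and R a correspondence between X and Y with dis R < ∞. For t ∈ (0,1) let R_t denote the set R with the distance |(x,y),(x',y')|_t = (1−t)·d(x,x') + t·d(y,y'), and set R_0 = X, R_1 = Y. Then each |·|_t is a metric on R, and for all s, t ∈ [0,1]: 2·d_GH(X, R_t) ≤ t·dis R, 2·d_GH(R_t, Y) ≤ (1−t)·dis R, 2·d_GH(R_s, R_t) ≤ |s−t|·dis R, and diam R_t ≤ max{diam X, diam Y}. -/

import Mathlib

open Metric Set
open scoped ENNReal

def IsCorrespondence {X Y : Type*} (R : Set (X × Y)) : Prop :=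
  (∀ x : X, ∃ y : Y, (x, y) ∈ R) ∧ (∀ y : Y, ∃ x : X, (x, y) ∈ R)

noncomputable def corrDistortion {X Y : Type*} [MetricSpace X] [MetricSpace Y]
    (R : Set (X × Y)) : ℝ≥0∞ :=
  ⨆ p ∈ R, ⨆ q ∈ R, ENNReal.ofReal |dist p.1 q.1 - dist p.2 q.2|

noncomputable def ghDist (X Y : Type*) [MetricSpace X] [MetricSpace Y] : ℝ≥0∞ :=
  (⨅ (R : Set (X × Y)) (_ : IsCorrespondence R), corrDistortion R) / 2

lemma two_ghDist_le {X Y : Type*} [MetricSpace X] [MetricSpace Y]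
    (S : Set (X × Y)) (hS : IsCorrespondence S) : 2 * ghDist X Y ≤ corrDistortion S := by
  rw [ghDist, ENNReal.mul_div_cancel two_ne_zero ENNReal.ofNat_ne_top]
  exact iInf₂_le S hS

lemma corrDistortion_le {X Y : Type*} [MetricSpace X] [MetricSpace Y] {S : Set (X × Y)}
    {B : ℝ≥0∞} (h : ∀ p ∈ S, ∀ q ∈ S, ENNReal.ofReal |dist p.1 q.1 - dist p.2 q.2| ≤ B) :
    corrDistortion S ≤ B :=
  iSup₂_le fun p hp => iSup₂_le fun q hq => h p hp q hq

lemma le_corrDistortion {X Y : Type*} [MetricSpace X] [MetricSpace Y] {S : Set (X × Y)}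
    {p q : X × Y} (hp : p ∈ S) (hq : q ∈ S) :
    ENNReal.ofReal |dist p.1 q.1 - dist p.2 q.2| ≤ corrDistortion S :=
  le_iSup₂_of_le p hp (le_iSup₂_of_le q hq le_rfl)

/-- Bound `2 * ghDist X Z` via the graph of a surjection `Z → X`. -/
lemma aux1 {X Z : Type*} [MetricSpace X] [MetricSpace Z] (f : Z → X)
    (hf : Function.Surjective f) {B : ℝ≥0∞}
    (h : ∀ p q : Z, ENNReal.ofReal |dist (f p) (f q) - dist p q| ≤ B) :
    2 * ghDist X Z ≤ B := by
  set S : Set (X × Z) := {pr | f pr.2 = pr.1} with hSdef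
  have hS : IsCorrespondence S := by
    refine ⟨fun x => ?_, fun z => ⟨f z, rfl⟩⟩
    obtain ⟨z, hz⟩ := hf x
    exact ⟨z, hz⟩
  refine (two_ghDist_le S hS).trans (corrDistortion_le ?_)
  rintro ⟨x, p⟩ hp ⟨x', q⟩ hq
  have hx : f p = x := hp
  have hx' : f q = x' := hq
  subst hx hx'
  exact h p q

/-- Bound `2 * ghDist Z Y` via the graph of a surjection `Z → Y`. -/
lemma aux2 {Z Y : Type*} [MetricSpace Z] [MetricSpace Y] (g : Z → Y)
    (hg : Function.Surjective g) {B : ℝ≥0∞}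
    (h : ∀ p q : Z, ENNReal.ofReal |dist p q - dist (g p) (g q)| ≤ B) :
    2 * ghDist Z Y ≤ B := by
  set S : Set (Z × Y) := {pr | g pr.1 = pr.2} with hSdef
  have hS : IsCorrespondence S := by
    refine ⟨fun z => ⟨g z, rfl⟩, fun y => ?_⟩
    obtain ⟨z, hz⟩ := hg y
    exact ⟨z, hz⟩
  refine (two_ghDist_le S hS).trans (corrDistortion_le ?_)
  rintro ⟨p, y⟩ hp ⟨q, y'⟩ hq
  have hy : g p = y := hp
  have hy' : g q = y' := hq
  subst hy hy'
  exact h p q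

/-- Bound `2 * ghDist Z Z` (two metrics on the same space) via the diagonal. -/
lemma aux3 {Z : Type*} (M1 M2 : MetricSpace Z) {B : ℝ≥0∞}
    (h : ∀ p q : Z, ENNReal.ofReal
      |@dist Z M1.toPseudoMetricSpace.toDist p q - @dist Z M2.toPseudoMetricSpace.toDist p q| ≤ B) :
    2 * @ghDist Z Z M1 M2 ≤ B := by
  letI := M1; letI := M2
  set S : Set (Z × Z) := {pr | pr.1 = pr.2} with hSdef
  have hS : IsCorrespondence S := ⟨fun z => ⟨z, rfl⟩, fun z => ⟨z, rfl⟩⟩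
  refine le_trans (@two_ghDist_le Z Z M1 M2 S hS) (@corrDistortion_le Z Z M1 M2 S B ?_)
  rintro ⟨p, p'⟩ hp ⟨q, q'⟩ hq
  have hp' : p = p' := hp
  have hq' : q = q' := hq
  subst hp' hq'
  exact h p q

noncomputable def interpMS {X Y : Type*} [MetricSpace X] [MetricSpace Y]
    (R : Set (X × Y)) (t : ℝ) (ht : t ∈ Set.Ioo (0 : ℝ) 1) : MetricSpace ↥R where
  dist p q := (1 - t) * dist p.val.1 q.val.1 + t * dist p.val.2 q.val.2
  dist_self p := by simp
  dist_comm p q := by simp [dist_comm]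
  dist_triangle p q r := by
    show (1 - t) * dist p.val.1 r.val.1 + t * dist p.val.2 r.val.2 ≤
      ((1 - t) * dist p.val.1 q.val.1 + t * dist p.val.2 q.val.2) +
      ((1 - t) * dist q.val.1 r.val.1 + t * dist q.val.2 r.val.2)
    have h1 := dist_triangle p.val.1 q.val.1 r.val.1
    have h2 := dist_triangle p.val.2 q.val.2 r.val.2
    have e1 : (0:ℝ) ≤ 1 - t := by linarith [ht.2]
    have g1 := mul_le_mul_of_nonneg_left h1 e1
    have g2 := mul_le_mul_of_nonneg_left h2 ht.1.le
    linarith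
  eq_of_dist_eq_zero := by
    intro p q h
    have h' : (1 - t) * dist p.val.1 q.val.1 + t * dist p.val.2 q.val.2 = 0 := h
    have h0 : (0:ℝ) < t := ht.1
    have h1 : (0:ℝ) < 1 - t := by linarith [ht.2]
    have n1 := dist_nonneg (x := p.val.1) (y := q.val.1)
    have n2 := dist_nonneg (x := p.val.2) (y := q.val.2)
    have d1 : dist p.val.1 q.val.1 = 0 :=
      le_antisymm (by nlinarith [mul_nonneg h0.le n2]) n1
    have d2 : dist p.val.2 q.val.2 = 0 :=
      le_antisymm (by nlinarith [mul_nonneg h1.le n1]) n2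
    exact Subtype.ext (Prod.ext (dist_eq_zero.1 d1) (dist_eq_zero.1 d2))

theorem stmt1 {X Y : Type*} [MetricSpace X] [MetricSpace Y]
    (R : Set (X × Y)) (hR : IsCorrespondence R) (hfin : corrDistortion R ≠ ⊤) :
    ∃ M : ∀ t : ℝ, t ∈ Set.Ioo (0 : ℝ) 1 → MetricSpace ↥R,
      (∀ t ht, ∀ p q : ↥R, @dist ↥R (M t ht).toPseudoMetricSpace.toDist p q
          = (1 - t) * dist p.val.1 q.val.1 + t * dist p.val.2 q.val.2) ∧
      (∀ t ht, 2 * @ghDist X ↥R _ (M t ht) ≤ ENNReal.ofReal t * corrDistortion R) ∧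
      (∀ t ht, 2 * @ghDist ↥R Y (M t ht) _ ≤ ENNReal.ofReal (1 - t) * corrDistortion R) ∧
      (∀ s hs t ht, 2 * @ghDist ↥R ↥R (M s hs) (M t ht)
          ≤ ENNReal.ofReal |s - t| * corrDistortion R) ∧
      (2 * ghDist X Y ≤ corrDistortion R) ∧
      (∀ t ht, @EMetric.diam ↥R (M t ht).toPseudoMetricSpace.toPseudoEMetricSpace Set.univ
          ≤ max (EMetric.diam (Set.univ : Set X)) (EMetric.diam (Set.univ : Set Y))) := by
  refine ⟨fun t ht => interpMS R t ht, fun t ht p q => rfl, ?_, ?_, ?_, two_ghDist_le R hR, ?_⟩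
  · -- 2 ghDist X R_t ≤ t * disR
    intro t ht
    refine @aux1 X ↥R _ (interpMS R t ht) (fun p => p.val.1) ?_
      (ENNReal.ofReal t * corrDistortion R) ?_
    · intro x
      obtain ⟨y, hy⟩ := hR.1 x
      exact ⟨⟨(x, y), hy⟩, rfl⟩
    · intro p q
      show ENNReal.ofReal |dist p.val.1 q.val.1 -
          ((1 - t) * dist p.val.1 q.val.1 + t * dist p.val.2 q.val.2)|
        ≤ ENNReal.ofReal t * corrDistortion R
      have e : dist p.val.1 q.val.1 -
          ((1 - t) * dist p.val.1 q.val.1 + t * dist p.val.2 q.val.2)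
          = t * (dist p.val.1 q.val.1 - dist p.val.2 q.val.2) := by ring
      rw [e, abs_mul, abs_of_nonneg ht.1.le, ENNReal.ofReal_mul ht.1.le]
      exact mul_le_mul_right (le_corrDistortion p.2 q.2) _
  · -- 2 ghDist R_t Y ≤ (1-t) * disR
    intro t ht
    have h1 : (0:ℝ) ≤ 1 - t := by linarith [ht.2]
    refine @aux2 ↥R Y (interpMS R t ht) _ (fun p => p.val.2) ?_
      (ENNReal.ofReal (1 - t) * corrDistortion R) ?_
    · intro y
      obtain ⟨x, hx⟩ := hR.2 y
      exact ⟨⟨(x, y), hx⟩, rfl⟩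
    · intro p q
      show ENNReal.ofReal |((1 - t) * dist p.val.1 q.val.1 + t * dist p.val.2 q.val.2)
          - dist p.val.2 q.val.2| ≤ ENNReal.ofReal (1 - t) * corrDistortion R
      have e : ((1 - t) * dist p.val.1 q.val.1 + t * dist p.val.2 q.val.2)
          - dist p.val.2 q.val.2
          = (1 - t) * (dist p.val.1 q.val.1 - dist p.val.2 q.val.2) := by ring
      rw [e, abs_mul, abs_of_nonneg h1, ENNReal.ofReal_mul h1]
      exact mul_le_mul_right (le_corrDistortion p.2 q.2) _
  · -- 2 ghDist R_s R_t ≤ |s-t| * disR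
    intro s hs t ht
    refine aux3 (interpMS R s hs) (interpMS R t ht) ?_
    intro p q
    show ENNReal.ofReal |((1 - s) * dist p.val.1 q.val.1 + s * dist p.val.2 q.val.2)
        - ((1 - t) * dist p.val.1 q.val.1 + t * dist p.val.2 q.val.2)|
      ≤ ENNReal.ofReal |s - t| * corrDistortion R
    have e : ((1 - s) * dist p.val.1 q.val.1 + s * dist p.val.2 q.val.2)
        - ((1 - t) * dist p.val.1 q.val.1 + t * dist p.val.2 q.val.2)
        = (t - s) * (dist p.val.1 q.val.1 - dist p.val.2 q.val.2) := by ring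
    have habs : |s - t| = |t - s| := abs_sub_comm s t
    rw [e, abs_mul, habs, ENNReal.ofReal_mul (abs_nonneg _)]
    exact mul_le_mul_right (le_corrDistortion p.2 q.2) _
  · -- diameter bound
    intro t ht
    have h1 : (0:ℝ) ≤ 1 - t := by linarith [ht.2]
    set D := max (EMetric.diam (Set.univ : Set X)) (EMetric.diam (Set.univ : Set Y)) with hD
    refine @EMetric.diam_le ↥R Set.univ
      (interpMS R t ht).toPseudoMetricSpace.toPseudoEMetricSpace D ?_
    intro p _ q _
    rw [@edist_dist ↥R (interpMS R t ht).toPseudoMetricSpace p q]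
    show ENNReal.ofReal ((1 - t) * dist p.val.1 q.val.1 + t * dist p.val.2 q.val.2) ≤ D
    have hX : ENNReal.ofReal (dist p.val.1 q.val.1) ≤ D := by
      rw [← edist_dist]
      exact le_trans (EMetric.edist_le_diam_of_mem (mem_univ _) (mem_univ _)) (le_max_left _ _)
    have hY : ENNReal.ofReal (dist p.val.2 q.val.2) ≤ D := by
      rw [← edist_dist]
      exact le_trans (EMetric.edist_le_diam_of_mem (mem_univ _) (mem_univ _)) (le_max_right _ _)
    calc ENNReal.ofReal ((1 - t) * dist p.val.1 q.val.1 + t * dist p.val.2 q.val.2)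
        = ENNReal.ofReal (1 - t) * ENNReal.ofReal (dist p.val.1 q.val.1)
            + ENNReal.ofReal t * ENNReal.ofReal (dist p.val.2 q.val.2) := by
          rw [ENNReal.ofReal_add (mul_nonneg h1 dist_nonneg) (mul_nonneg ht.1.le dist_nonneg),
            ENNReal.ofReal_mul h1, ENNReal.ofReal_mul ht.1.le]
      _ ≤ ENNReal.ofReal (1 - t) * D + ENNReal.ofReal t * D :=
          add_le_add (mul_le_mul_right hX _) (mul_le_mul_right hY _)
      _ = (ENNReal.ofReal (1 - t) + ENNReal.ofReal t) * D := by rw [add_mul]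
      _ = D := by rw [← ENNReal.ofReal_add h1 ht.1.le]; norm_num
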